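/- Suppose a ∈ C¹(ℝ) satisfies 0 < A₁ ≤ a(t) ≤ A₂ and |a'(t)| ≤ A₃, and F ∈ C(ℝ) satisfies F(t) = αt + O(log(t)²) as t → +∞ with α > 0. If φ solves φ'(t) = −a(t)a'(t)·cos(bt + φ(t)) / (√(F(t)² − a(t)²)·(F(t) + √(F(t)² − a(t)²)·sin(bt + φ(t)))) on a neighborhood of +∞ (b > 0 constant), then φ(t) converges to a finite limit φ(∞) as t → +∞, with φ(t) = φ(∞) + O(log(t)/t). -/

import Mathlib

open Filter Real Set Asymptotics

/-- Variation bound: if `|f'| ≤ g'` on `[t₁,t₂]` then `|f t₂ - f t₁| ≤ g t₂ - g t₁`. -/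
lemma var_bound {f g : ℝ → ℝ} {f' g' : ℝ → ℝ} {t₁ t₂ : ℝ} (h12 : t₁ ≤ t₂)
    (hf : ∀ t ∈ Set.Icc t₁ t₂, HasDerivAt f (f' t) t)
    (hg : ∀ t ∈ Set.Icc t₁ t₂, HasDerivAt g (g' t) t)
    (hle : ∀ t ∈ Set.Icc t₁ t₂, |f' t| ≤ g' t) :
    |f t₂ - f t₁| ≤ g t₂ - g t₁ := by
  have key : ∀ (s : ℝ → ℝ) (s' : ℝ → ℝ), (∀ t ∈ Set.Icc t₁ t₂, HasDerivAt s (s' t) t) →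
      (∀ t ∈ Set.Icc t₁ t₂, 0 ≤ s' t) → s t₁ ≤ s t₂ := by
    intro s s' hs hs'
    have hmono : MonotoneOn s (Set.Icc t₁ t₂) := by
      apply monotoneOn_of_deriv_nonneg (convex_Icc _ _)
      · intro t ht; exact (hs t ht).continuousAt.continuousWithinAt
      · intro t ht
        exact (hs t (Set.mem_Icc_of_Ioo (by rwa [interior_Icc] at ht))).differentiableAt.differentiableWithinAt
      · intro t ht
        rw [interior_Icc] at ht
        rw [(hs t (Set.mem_Icc_of_Ioo ht)).deriv]
        exact hs' t (Set.mem_Icc_of_Ioo ht)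
    exact hmono (Set.left_mem_Icc.2 h12) (Set.right_mem_Icc.2 h12) h12
  have h1 : (g - f) t₁ ≤ (g - f) t₂ := by
    apply key (g - f) (fun t => g' t - f' t)
    · intro t ht; exact (hg t ht).sub (hf t ht)
    · intro t ht; have := (abs_le.1 (hle t ht)).2; linarith
  have h2 : (g + f) t₁ ≤ (g + f) t₂ := by
    apply key (g + f) (fun t => g' t + f' t)
    · intro t ht; exact (hg t ht).add (hf t ht)
    · intro t ht; have := (abs_le.1 (hle t ht)).1; linarith
  simp only [Pi.sub_apply, Pi.add_apply] at h1 h2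
  rw [abs_le]; constructor <;> linarith

/-- `(log x + 1)/x²` is antitone on `[1,∞)`. -/
lemma psi_antitone {x y : ℝ} (hx : 1 ≤ x) (hxy : x ≤ y) :
    (Real.log y + 1) / y ^ 2 ≤ (Real.log x + 1) / x ^ 2 := by
  have h : AntitoneOn (fun z => (Real.log z + 1) / z ^ 2) (Set.Ici 1) := by
    apply antitoneOn_of_deriv_nonpos (convex_Ici _)
    · apply ContinuousOn.div
      · exact (Real.continuousOn_log.mono (by intro z hz; simp at hz ⊢; linarith)).add continuousOn_const
      · fun_prop
      · intro z hz; simp at hz; positivity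
    · intro z hz
      rw [interior_Ici] at hz; simp at hz
      apply DifferentiableAt.differentiableWithinAt
      have hz0 : z ≠ 0 := by positivity
      have hz2 : z ^ 2 ≠ 0 := pow_ne_zero 2 hz0
      exact ((Real.differentiableAt_log hz0).add_const 1).div (differentiableAt_pow 2) hz2
    · intro z hz
      rw [interior_Ici] at hz; simp at hz
      have hz0 : (0:ℝ) < z := by linarith
      have hd : HasDerivAt (fun z => (Real.log z + 1) / z ^ 2)
          ((z⁻¹ * z ^ 2 - (Real.log z + 1) * (2 * z)) / (z ^ 2) ^ 2) z := by
        apply HasDerivAt.div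
        · exact (Real.hasDerivAt_log hz0.ne').add_const 1
        · simpa using hasDerivAt_pow 2 z
        · positivity
      rw [hd.deriv]
      have hlog : 0 ≤ Real.log z := Real.log_nonneg hz.le
      have he : z⁻¹ * z ^ 2 = z := by field_simp
      rw [he]
      apply div_nonpos_of_nonpos_of_nonneg
      · nlinarith
      · positivity
  exact h (by simp [hx]) (by simp; linarith) hxy

/-- Difference bound for `G z = (log z + 2)/z` : `G x - G y ≥ (y-x)·(log y+1)/y²`. -/
lemma G_diff {x y : ℝ} (hx : 1 ≤ x) (hxy : x ≤ y) :
    (y - x) * ((Real.log y + 1) / y ^ 2) ≤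
      (Real.log x + 2) / x - (Real.log y + 2) / y := by
  set c := (Real.log y + 1) / y ^ 2 with hc
  have hy : (1:ℝ) ≤ y := le_trans hx hxy
  have hW : AntitoneOn (fun z => (Real.log z + 2) / z + c * z) (Set.Icc x y) := by
    apply antitoneOn_of_deriv_nonpos (convex_Icc _ _)
    · have hcont : ContinuousOn (fun z : ℝ => (Real.log z + 2) / z) (Set.Icc x y) := by
        apply ContinuousOn.div
        · exact (Real.continuousOn_log.mono (fun z hz => by
            simp at hz ⊢; intro h; rw [h] at hz; linarith [hz.1])).add continuousOn_const
        · fun_prop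
        · intro z hz; simp at hz; intro h; rw [h] at hz; linarith [hz.1]
      exact hcont.add (by fun_prop)
    · intro z hz
      rw [interior_Icc] at hz
      have hz0 : z ≠ 0 := by intro h; rw [h] at hz; simp at hz; linarith [hz.1]
      apply DifferentiableAt.differentiableWithinAt
      exact (((Real.differentiableAt_log hz0).add_const 2).div differentiableAt_id hz0).add
        ((differentiableAt_id.const_mul c))
    · intro z hz
      rw [interior_Icc] at hz
      have hz1 : 1 < z := lt_of_le_of_lt hx hz.1
      have hz0 : (0:ℝ) < z := by linarith
      have hd : HasDerivAt (fun z => (Real.log z + 2) / z + c * z)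
          ((z⁻¹ * z - (Real.log z + 2) * 1) / z ^ 2 + c * 1) z := by
        exact (((Real.hasDerivAt_log hz0.ne').add_const 2).div (hasDerivAt_id z) hz0.ne').add
          ((hasDerivAt_id z).const_mul c)
      rw [hd.deriv]
      have he : z⁻¹ * z = 1 := inv_mul_cancel₀ hz0.ne'
      rw [he]
      have h1 : (1 - (Real.log z + 2) * 1) / z ^ 2 = -((Real.log z + 1)/z^2) := by ring
      rw [h1]
      have h2 : c ≤ (Real.log z + 1)/z^2 := psi_antitone hz1.le hz.2.le
      linarith
  have h := hW (Set.left_mem_Icc.2 hxy) (Set.right_mem_Icc.2 hxy) hxy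
  simp only at h
  nlinarith [h]

/-- Cauchy–Schwarz: `A·|cos θ| ≤ P + S·sin θ` when `P² = S² + A²`, `P,A ≥ 0`. -/
lemma cs_bound {P S A θ : ℝ} (hP : 0 ≤ P) (hA : 0 ≤ A) (h : P ^ 2 = S ^ 2 + A ^ 2) :
    A * |Real.cos θ| ≤ P + S * Real.sin θ := by
  have h1 : Real.sin θ ^ 2 + Real.cos θ ^ 2 = 1 := Real.sin_sq_add_cos_sq θ
  have h2 : |Real.cos θ| ^ 2 = Real.cos θ ^ 2 := sq_abs _
  nlinarith [sq_nonneg (S * |Real.cos θ| + A * Real.sin θ),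
    sq_nonneg (A * |Real.cos θ| - S * Real.sin θ), abs_nonneg (Real.cos θ),
    neg_abs_le (Real.sin θ), Real.abs_sin_le_one θ]

/-- sign of cos on `[π/2 + mπ, π/2 + (m+1)π]`. -/
lemma cos_sign (m : ℕ) {x : ℝ} (h1 : π/2 + m * π ≤ x) (h2 : x ≤ π/2 + (m+1) * π) :
    0 ≤ (-1:ℝ)^(m+1) * Real.cos x := by
  induction m generalizing x with
  | zero =>
    simp only [Nat.cast_zero, zero_mul, add_zero] at h1
    norm_num
    have : Real.cos x ≤ 0 := Real.cos_nonpos_of_pi_div_two_le_of_le h1 (by push_cast at h2; linarith)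
    linarith
  | succ n ih =>
    have h1' : π/2 + n * π ≤ x - π := by push_cast at h1 ⊢; linarith
    have h2' : x - π ≤ π/2 + (n+1) * π := by push_cast at h2 ⊢; linarith
    have := ih h1' h2'
    have hc : Real.cos x = - Real.cos (x - π) := by rw [Real.cos_sub_pi]; ring
    rw [hc]
    have hp : (-1:ℝ)^(n+1+1) = -(-1:ℝ)^(n+1) := by ring
    rw [hp]
    nlinarith

set_option maxHeartbeats 4000000 in
theorem phase_converges (a a' F φ : ℝ → ℝ) (A₁ A₂ A₃ α b : ℝ)
    (hA₁ : 0 < A₁) (hα : 0 < α) (hb : 0 < b)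
    (ha : ∀ t, HasDerivAt a (a' t) t)
    (hbounds : ∀ t, A₁ ≤ a t ∧ a t ≤ A₂ ∧ |a' t| ≤ A₃)
    (hF : Continuous F)
    (hFasym : ∃ C T : ℝ, ∀ t ≥ T, |F t - α * t| ≤ C * Real.log t ^ 2)
    (hφ : ∃ T₀ : ℝ, ∀ t ≥ T₀, HasDerivAt φ
        (-(a t * a' t * Real.cos (b * t + φ t)) /
          (Real.sqrt (F t ^ 2 - a t ^ 2) *
            (F t + Real.sqrt (F t ^ 2 - a t ^ 2) * Real.sin (b * t + φ t)))) t) :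
    ∃ φinf : ℝ, Filter.Tendsto φ Filter.atTop (nhds φinf) ∧
      ∃ C' T' : ℝ, ∀ t ≥ T', |φ t - φinf| ≤ C' * Real.log t / t := by
  classical
  obtain ⟨C, T, hCT⟩ := hFasym
  obtain ⟨T₀, hT₀⟩ := hφ
  -- abbreviations
  set S : ℝ → ℝ := fun t => Real.sqrt (F t ^ 2 - a t ^ 2) with hSdef
  set u : ℝ → ℝ := fun t => b * t + φ t with hudef
  set dφ : ℝ → ℝ := fun t => -(a t * a' t * Real.cos (u t)) / (S t * (F t + S t * Real.sin (u t)))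
    with hdφdef
  have hT₀' : ∀ t ≥ T₀, HasDerivAt φ (dφ t) t := hT₀
  -- basic constants
  have hA₂ : 0 < A₂ := lt_of_lt_of_le hA₁ (le_trans (hbounds 0).1 (hbounds 0).2.1)
  have hA₃ : 0 ≤ A₃ := le_trans (abs_nonneg _) (hbounds 0).2.2
  have hA₁₂ : A₁ ≤ A₂ := le_trans (hbounds 0).1 (hbounds 0).2.1
  -- Step A: choose T₂
  have hev : ∀ᶠ t in atTop, C * Real.log t ^ 2 ≤ (α/2) * t := by
    have h1 : (fun x:ℝ => Real.log x ^ 2) =o[atTop] (fun x:ℝ => x) := by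
      have hh := (isLittleO_log_rpow_atTop (by norm_num : (0:ℝ) < 1/2))
      have h2 := hh.mul hh
      refine h2.congr' (by filter_upwards with x; ring) ?_
      filter_upwards [eventually_ge_atTop (0:ℝ)] with x hx
      rw [← Real.rpow_add' hx (by norm_num)]
      norm_num
    have h3 := h1.def (c := (α/2) / (max C 1)) (by positivity)
    filter_upwards [h3, eventually_ge_atTop (0:ℝ)] with t ht ht0
    simp only [norm_eq_abs] at ht
    have hm : (0:ℝ) < max C 1 := lt_max_of_lt_right (by norm_num)
    have h4 : C * Real.log t ^2 ≤ (max C 1) * (Real.log t ^2) := by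
      have : (0:ℝ) ≤ Real.log t ^ 2 := sq_nonneg _
      nlinarith [le_max_left C 1]
    calc C * Real.log t ^2 ≤ (max C 1) * Real.log t ^2 := h4
      _ ≤ (max C 1) * |Real.log t ^ 2| := by
          nlinarith [le_abs_self (Real.log t ^2)]
      _ ≤ (max C 1) * ((α/2) / max C 1 * |t|) := mul_le_mul_of_nonneg_left ht hm.le
      _ = (α/2) * |t| := by field_simp
      _ = (α/2) * t := by rw [abs_of_nonneg ht0]
  obtain ⟨T₁', hT₁'⟩ := eventually_atTop.1 hev
  set T₂ : ℝ := max (max T₁' T) (max T₀ (max (4*A₂/α + 8*A₃/(α*b)) (2*π/b + 3))) with hT₂def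
  have hT₂₁ : T₁' ≤ T₂ := le_max_of_le_left (le_max_left _ _)
  have hT₂T : T ≤ T₂ := le_max_of_le_left (le_max_right _ _)
  have hT₂₀ : T₀ ≤ T₂ := le_max_of_le_right (le_max_left _ _)
  have hT₂a : 4*A₂/α + 8*A₃/(α*b) ≤ T₂ := le_max_of_le_right (le_max_of_le_right (le_max_left _ _))
  have hT₂b : 2*π/b + 3 ≤ T₂ := le_max_of_le_right (le_max_of_le_right (le_max_right _ _))
  have hπ : (0:ℝ) < π := Real.pi_pos
  have hT₂3 : (3:ℝ) ≤ T₂ := by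
    have : 0 ≤ 2*π/b := by positivity
    linarith
  -- facts for t ≥ T₂
  have hFlb : ∀ t ≥ T₂, α * t / 2 ≤ F t := by
    intro t ht
    have h1 := hCT t (le_trans hT₂T ht)
    have h2 := hT₁' t (le_trans hT₂₁ ht)
    have := abs_le.1 h1
    linarith [this.1]
  have hFub : ∀ t ≥ T₂, F t ≤ 2 * α * t := by
    intro t ht
    have h1 := hCT t (le_trans hT₂T ht)
    have h2 := hT₁' t (le_trans hT₂₁ ht)
    have := abs_le.1 h1
    linarith [this.2]
  have haA : ∀ t ≥ T₂, 4 * A₂ ≤ α * t := by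
    intro t ht
    have h8 : 0 ≤ 8*A₃/(α*b) := by positivity
    have : 4*A₂/α ≤ t := by linarith
    calc 4*A₂ = α * (4*A₂/α) := by field_simp
    _ ≤ α * t := by apply mul_le_mul_of_nonneg_left this hα.le
  have ha2F : ∀ t ≥ T₂, 2 * a t ≤ F t := by
    intro t ht
    have h1 := hFlb t ht
    have h2 := haA t ht
    have h3 := (hbounds t).2.1
    linarith
  have haPos : ∀ t, 0 < a t := fun t => lt_of_lt_of_le hA₁ (hbounds t).1
  have hFpos : ∀ t ≥ T₂, 0 < F t := by
    intro t ht; have := ha2F t ht; have := haPos t; linarith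
  have hSsq : ∀ t ≥ T₂, S t ^ 2 = F t ^ 2 - a t ^ 2 := by
    intro t ht
    apply Real.sq_sqrt
    have h1 := ha2F t ht; have h2 := haPos t
    nlinarith
  have hSF : ∀ t ≥ T₂, F t / 2 ≤ S t ∧ S t ≤ F t := by
    intro t ht
    have h1 := ha2F t ht; have h2 := haPos t
    have hs := hSsq t ht
    have hSnn : 0 ≤ S t := Real.sqrt_nonneg _
    constructor
    · nlinarith
    · nlinarith
  have hSlb : ∀ t ≥ T₂, α * t / 4 ≤ S t := by
    intro t ht
    have := (hSF t ht).1; have := hFlb t ht; linarith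
  have hSub : ∀ t ≥ T₂, S t ≤ 2 * α * t := by
    intro t ht
    have := (hSF t ht).2; have := hFub t ht; linarith
  have htpos : ∀ t ≥ T₂, (0:ℝ) < t := fun t ht => by linarith
  -- gap: S ≤ F - A₁²/(4αt)
  have hgap : ∀ t ≥ T₂, S t ≤ F t - A₁^2/(4*α*t) := by
    intro t ht
    have ht0 := htpos t ht
    have hFt := hFpos t ht
    have hFu := hFub t ht
    have h2 := haPos t
    have ha1 := (hbounds t).1
    have heps : 0 < A₁^2/(4*α*t) := by positivity
    have e1 : A₁^2/(4*α*t) * (4*α*t) = A₁^2 := div_mul_cancel₀ _ (by positivity)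
    have hkey : 2 * (A₁^2/(4*α*t)) * F t ≤ A₁^2 := by
      nlinarith [mul_le_mul_of_nonneg_left hFu heps.le, e1]
    have heps_small : A₁^2/(4*α*t) ≤ α*t/64 := by
      rw [div_le_div_iff₀ (by positivity) (by norm_num : (0:ℝ) < 64)]
      nlinarith [haA t ht, hA₁₂, hA₁]
    have hle : F t ^ 2 - a t ^ 2 ≤ (F t - A₁^2/(4*α*t)) ^ 2 := by nlinarith
    have hnn : 0 ≤ F t - A₁^2/(4*α*t) := by linarith [hFlb t ht]
    calc S t ≤ Real.sqrt ((F t - A₁^2/(4*α*t))^2) := Real.sqrt_le_sqrt hle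
    _ = F t - A₁^2/(4*α*t) := Real.sqrt_sq hnn
  -- denominator positive and pointwise derivative bound
  have hdenpos : ∀ t ≥ T₂, 0 < S t * (F t + S t * Real.sin (u t)) := by
    intro t ht
    have h1 := hSlb t ht
    have h2 := hgap t ht
    have ht0 := htpos t ht
    have hS0 : 0 < S t := lt_of_lt_of_le (by positivity) h1
    apply mul_pos hS0
    have hsin : -1 ≤ Real.sin (u t) := Real.neg_one_le_sin _
    have heps : 0 < A₁^2/(4*α*t) := by positivity
    nlinarith
  have hdφbound : ∀ t ≥ T₂, |dφ t| ≤ 4*A₃/(α*t) := by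
    intro t ht
    have ht0 := htpos t ht
    have hD := hdenpos t ht
    have hS0 : 0 < S t := lt_of_lt_of_le (by positivity) (hSlb t ht)
    have hden2 : 0 < F t + S t * Real.sin (u t) := by
      by_contra hcon
      push_neg at hcon
      nlinarith [mul_nonpos_of_nonneg_of_nonpos hS0.le hcon]
    have hcs : a t * |Real.cos (u t)| ≤ F t + S t * Real.sin (u t) :=
      cs_bound (hFpos t ht).le (haPos t).le (by have := hSsq t ht; linarith)
    have habs : |dφ t| = (a t * |a' t| * |Real.cos (u t)|) /
        (S t * (F t + S t * Real.sin (u t))) := by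
      show |-(a t * a' t * Real.cos (u t)) / (S t * (F t + S t * Real.sin (u t)))| = _
      rw [abs_div, abs_neg, abs_mul, abs_mul, abs_of_pos (haPos t), abs_of_pos hD]
    rw [habs, div_le_div_iff₀ hD (by positivity : (0:ℝ) < α*t)]
    have hnum : a t * |a' t| * |Real.cos (u t)| ≤ A₃ * (F t + S t * Real.sin (u t)) := by
      have h5 : a t * |a' t| * |Real.cos (u t)| ≤ A₃ * (a t * |Real.cos (u t)|) := by
        nlinarith [mul_nonneg (mul_nonneg (haPos t).le (abs_nonneg (Real.cos (u t))))
          (sub_nonneg.2 (hbounds t).2.2)]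
      nlinarith [mul_le_mul_of_nonneg_left hcs hA₃]
    have hαt : α * t ≤ 4 * S t := by linarith [hSlb t ht]
    have hnn : 0 ≤ a t * |a' t| * |Real.cos (u t)| :=
      mul_nonneg (mul_nonneg (haPos t).le (abs_nonneg _)) (abs_nonneg _)
    calc a t * |a' t| * |Real.cos (u t)| * (α * t)
        ≤ (A₃ * (F t + S t * Real.sin (u t))) * (4 * S t) :=
          mul_le_mul hnum hαt (by positivity) (mul_nonneg hA₃ hden2.le)
      _ = 4*A₃ * (S t * (F t + S t * Real.sin (u t))) := by ring

  have hdφb2 : ∀ t ≥ T₂, |dφ t| ≤ b/2 := by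
    intro t ht
    have ht0 := htpos t ht
    refine le_trans (hdφbound t ht) ?_
    have ht8 : 8*A₃/(α*b) ≤ t := by
      have h9 : 0 ≤ 4*A₂/α := by positivity
      linarith [hT₂a, ht]
    have e2 : α*b*(8*A₃/(α*b)) = 8*A₃ := by field_simp
    have h10 : 8*A₃ ≤ α*b*t := by
      have hh : α*b*(8*A₃/(α*b)) ≤ α*b*t := mul_le_mul_of_nonneg_left ht8 (by positivity)
      linarith [e2 ▸ hh]
    rw [div_le_div_iff₀ (by positivity : (0:ℝ) < α*t) (by norm_num : (0:ℝ) < 2)]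
    nlinarith
  have habs' : ∀ t, |dφ t| = (a t * |a' t| * |Real.cos (u t)|) /
      |S t * (F t + S t * Real.sin (u t))| := by
    intro t
    show |-(a t * a' t * Real.cos (u t)) / (S t * (F t + S t * Real.sin (u t)))| = _
    rw [abs_div, abs_neg, abs_mul, abs_mul, abs_of_pos (haPos t)]
  -- u facts
  have hu : ∀ t ≥ T₂, HasDerivAt u (b + dφ t) t := by
    intro t ht
    have h1 : HasDerivAt (fun t => b * t) b t := by
      simpa using (hasDerivAt_id t).const_mul b
    exact h1.add (hT₀' t (le_trans hT₂₀ ht))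
  have huderiv : ∀ t ≥ T₂, b/2 ≤ b + dφ t ∧ b + dφ t ≤ 2*b := by
    intro t ht
    have := abs_le.1 (hdφb2 t ht)
    constructor <;> linarith [this.1, this.2]
  have humono : ∀ t₁ t₂ : ℝ, T₂ ≤ t₁ → t₁ ≤ t₂ →
      b/2*(t₂ - t₁) ≤ u t₂ - u t₁ ∧ u t₂ - u t₁ ≤ 2*b*(t₂ - t₁) := by
    intro t₁ t₂ h1 h12
    have hsub : ∀ t ∈ Set.Icc t₁ t₂, T₂ ≤ t := fun t ht => le_trans h1 ht.1
    constructor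
    · have := var_bound (f := fun t => b/2*t) (g := u) (f' := fun _ => b/2)
        (g' := fun t => b + dφ t) h12
        (fun t _ => by simpa using (hasDerivAt_id t).const_mul (b/2))
        (fun t ht => hu t (hsub t ht))
        (fun t ht => by
          rw [abs_of_nonneg (by positivity)]
          exact (huderiv t (hsub t ht)).1)
      have h2 : |b/2*t₂ - b/2*t₁| = b/2*(t₂-t₁) := by
        rw [abs_of_nonneg (by nlinarith)]; ring
      rw [h2] at this; linarith
    · have := var_bound (f := u) (g := fun t => 2*b*t) (f' := fun t => b + dφ t)
        (g' := fun _ => 2*b) h12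
        (fun t ht => hu t (hsub t ht))
        (fun t _ => by simpa using (hasDerivAt_id t).const_mul (2*b))
        (fun t ht => by
          have h3 := huderiv t (hsub t ht)
          have h4 : |b + dφ t| ≤ 2*b := by
            rw [abs_le]; constructor <;> linarith [h3.1, h3.2]
          simpa using h4)
      have h2 : 2*b*t₂ - 2*b*t₁ = 2*b*(t₂-t₁) := by ring
      rw [h2] at this
      linarith [le_abs_self (u t₂ - u t₁)]
  have hucont : ContinuousOn u (Set.Ici T₂) := fun t ht =>
    ((hu t ht).continuousAt).continuousWithinAt
  have hφd : ∀ t ≥ T₂, HasDerivAt φ (dφ t) t := fun t ht => hT₀' t (le_trans hT₂₀ ht)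
  clear_value S u dφ
  clear hSdef hudef hdφdef hT₀ hT₀'
  -- Step C: stopping times
  obtain ⟨m₀', hm₀'⟩ := exists_nat_ge ((u T₂)/π)
  obtain ⟨θ, hθdef⟩ : ∃ θ : ℕ → ℝ, θ = fun k => π/2 + (m₀' + k : ℕ) * π := ⟨_, rfl⟩
  have hθ0 : u T₂ ≤ θ 0 := by
    have h1 : u T₂ ≤ m₀' * π := by
      have := mul_le_mul_of_nonneg_right hm₀' hπ.le
      rwa [div_mul_cancel₀ _ hπ.ne'] at this
    have h2 : θ 0 = π/2 + (m₀' : ℝ) * π := by rw [hθdef]; push_cast; ring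
    rw [h2]
    linarith
  have hθk : ∀ k : ℕ, u T₂ ≤ θ k := by
    intro k
    refine le_trans hθ0 ?_
    have h2 : θ 0 = π/2 + (m₀' : ℝ) * π := by rw [hθdef]; push_cast; ring
    have h3 : θ k = π/2 + ((m₀' : ℝ) + k) * π := by rw [hθdef]; push_cast; ring
    rw [h2, h3]
    have h4 : (0:ℝ) ≤ (k:ℝ) := Nat.cast_nonneg k
    nlinarith
  have hθsucc : ∀ k : ℕ, θ (k+1) = θ k + π := by
    intro k
    have h3 : θ k = π/2 + ((m₀' : ℝ) + k) * π := by rw [hθdef]; push_cast; ring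
    have h4 : θ (k+1) = π/2 + ((m₀' : ℝ) + k + 1) * π := by rw [hθdef]; push_cast; ring
    rw [h3, h4]; ring
  have hτex : ∀ k : ℕ, ∃ t, T₂ ≤ t ∧ u t = θ k := by
    intro k
    set M := T₂ + 2*(θ k - u T₂)/b + 1 with hMdef
    clear_value M
    have hθge := hθk k
    have hM : T₂ ≤ M := by
      have : 0 ≤ 2*(θ k - u T₂)/b := div_nonneg (by linarith) hb.le
      simp only [hMdef]; linarith
    have hstep := (humono T₂ M le_rfl hM).1
    have hMcalc : b/2 * (M - T₂) = (θ k - u T₂) + b/2 := by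
      simp only [hMdef]; field_simp; ring
    have hub : θ k ≤ u M := by
      rw [hMcalc] at hstep; linarith
    have hmem : θ k ∈ Set.Icc (u T₂) (u M) := ⟨hθge, hub⟩
    have := intermediate_value_Icc hM (hucont.mono (fun x hx => hx.1))
    obtain ⟨t, htm, hut⟩ := this hmem
    exact ⟨t, htm.1, hut⟩
  choose τ hτT hτθ using hτex
  have hτord : ∀ k : ℕ, τ k ≤ τ (k+1) := by
    intro k
    by_contra hcon
    push_neg at hcon
    have h1 := (humono (τ (k+1)) (τ k) (hτT _) hcon.le).1
    rw [hτθ, hτθ, hθsucc] at h1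
    have h2 : 0 ≤ b/2*(τ k - τ (k+1)) := by nlinarith
    linarith
  have hsp : ∀ k : ℕ, π/(2*b) ≤ τ (k+1) - τ k ∧ τ (k+1) - τ k ≤ 2*π/b := by
    intro k
    have h1 := humono (τ k) (τ (k+1)) (hτT _) (hτord k)
    rw [hτθ, hτθ, hθsucc] at h1
    have h2 : θ k + π - θ k = π := by ring
    rw [h2] at h1
    constructor
    · rw [div_le_iff₀ (by positivity : (0:ℝ) < 2*b)]
      nlinarith [h1.2]
    · rw [le_div_iff₀ hb]
      nlinarith [h1.1]
  have hτ3 : ∀ k, 3 ≤ τ k := fun k => le_trans hT₂3 (hτT k)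
  have hτpos : ∀ k, (0:ℝ) < τ k := fun k => by linarith [hτ3 k]
  have hτub : ∀ k : ℕ, τ (k+1) ≤ 2 * τ k := by
    intro k
    have h1 := (hsp k).2
    have h2 : 2*π/b ≤ T₂ := by linarith
    have h3 := hτT k
    linarith
  have hτmon : Monotone τ := monotone_nat_of_le_succ hτord
  have hτgrow : ∀ k : ℕ, τ 0 + k * (π/(2*b)) ≤ τ k := by
    intro k
    induction k with
    | zero => simp
    | succ n ih =>
      have := (hsp n).1
      push_cast
      push_cast at ih
      linarith
  -- Step D: constants
  have hexp3 : Real.exp 1 ≤ 3 := le_trans Real.exp_one_lt_d9.le (by norm_num)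
  have hlogt1 : ∀ t : ℝ, 3 ≤ t → 1 ≤ Real.log t := by
    intro t ht
    rw [Real.le_log_iff_exp_le (by linarith)]
    simpa using le_trans hexp3 ht
  obtain ⟨c₀, hc₀⟩ : ∃ c : ℝ, c = |Real.log (8*α^2/A₁^2)| := ⟨_, rfl⟩
  have hc₀0 : 0 ≤ c₀ := hc₀ ▸ abs_nonneg _
  obtain ⟨C₂, hC₂⟩ : ∃ c : ℝ, c = 32*A₂*A₃/(b*α^2) * (2 + c₀) := ⟨_, rfl⟩
  have hC₂0 : 0 ≤ C₂ := by rw [hC₂]; positivity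
  obtain ⟨C₃, hC₃⟩ : ∃ c : ℝ, c = 8*b*C₂/π := ⟨_, rfl⟩
  have hC₃0 : 0 ≤ C₃ := by rw [hC₃]; positivity
  obtain ⟨G, hG⟩ : ∃ G : ℝ → ℝ, G = fun x => C₃ * ((Real.log x + 2)/x) := ⟨_, rfl⟩
  have hGnn : ∀ x : ℝ, 3 ≤ x → 0 ≤ G x := by
    intro x hx
    rw [hG]
    have h1 : 0 ≤ Real.log x := Real.log_nonneg (by linarith)
    have h2 : (0:ℝ) < x := by linarith
    positivity
  -- Step D: the per-piece bound
  have hpiece : ∀ k : ℕ, ∀ t₁ ∈ Set.Icc (τ k) (τ (k+1)), ∀ t₂ ∈ Set.Icc (τ k) (τ (k+1)),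
      t₁ ≤ t₂ → |φ t₂ - φ t₁| ≤ C₂ * ((Real.log (τ k) + 1) / (τ k)^2) := by
    intro k t₁ h₁ t₂ h₂ h12
    have hτk3 := hτ3 k
    have hτkpos := hτpos k
    have hτkT := hτT k
    obtain ⟨q, hq⟩ : ∃ q:ℝ, q = α * τ k / 4 := ⟨_, rfl⟩
    obtain ⟨eps, heps⟩ : ∃ e:ℝ, e = A₁^2/(8*α*τ k) := ⟨_, rfl⟩
    obtain ⟨p, hp⟩ : ∃ p:ℝ, p = eps + q := ⟨_, rfl⟩
    obtain ⟨σ, hσdef⟩ : ∃ s:ℝ, s = (-1:ℝ)^(m₀' + k + 1) := ⟨_, rfl⟩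
    have hq0 : 0 < q := by rw [hq]; positivity
    have heps0 : 0 < eps := by rw [heps]; positivity
    have hincl : ∀ t ∈ Set.Icc (τ k) (τ (k+1)), T₂ ≤ t ∧ t ≤ 2 * τ k :=
      fun t ht => ⟨le_trans (hτT k) ht.1, le_trans ht.2 (hτub k)⟩
    have hqS : ∀ t ∈ Set.Icc (τ k) (τ (k+1)), q ≤ S t := by
      intro t ht
      have h1 := hSlb t (hincl t ht).1
      have h2 : α*τ k ≤ α*t := mul_le_mul_of_nonneg_left ht.1 hα.le
      rw [hq]; linarith
    have hgap2 : ∀ t ∈ Set.Icc (τ k) (τ (k+1)), eps ≤ F t - S t := by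
      intro t ht
      have h1 := hgap t (hincl t ht).1
      have ht0 := htpos t (hincl t ht).1
      have h2 : A₁^2/(8*α*τ k) ≤ A₁^2/(4*α*t) := by
        apply div_le_div_of_nonneg_left (by positivity) (by positivity)
        nlinarith [(hincl t ht).2]
      rw [heps]; linarith
    have hXlow : ∀ t : ℝ, eps ≤ p + q * Real.sin (u t) := by
      intro t
      linarith [mul_le_mul_of_nonneg_left (Real.neg_one_le_sin (u t)) hq0.le, hp]
    have hXpos : ∀ t : ℝ, 0 < p + q * Real.sin (u t) :=
      fun t => lt_of_lt_of_le heps0 (hXlow t)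
    have hXup : ∀ t : ℝ, p + q * Real.sin (u t) ≤ p + q := by
      intro t
      linarith [mul_le_mul_of_nonneg_left (Real.sin_le_one (u t)) hq0.le]
    have hXF : ∀ t ∈ Set.Icc (τ k) (τ (k+1)),
        p + q * Real.sin (u t) ≤ F t + S t * Real.sin (u t) := by
      intro t ht
      have h1 := hgap2 t ht
      have h2 := hqS t ht
      have h3 := Real.neg_one_le_sin (u t)
      linarith [mul_nonneg (sub_nonneg.2 h2) (by linarith : (0:ℝ) ≤ 1 + Real.sin (u t)), hp]
    have hmemθ : ∀ t ∈ Set.Icc (τ k) (τ (k+1)), θ k ≤ u t ∧ u t ≤ θ (k+1) := by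
      intro t ht
      have hTt := (hincl t ht).1
      have h1 := (humono (τ k) t hτkT ht.1).1
      have h2 := (humono t (τ (k+1)) hTt ht.2).1
      rw [hτθ] at h1 h2
      constructor
      · linarith [mul_nonneg (by linarith : (0:ℝ) ≤ b/2) (by linarith [ht.1] : (0:ℝ) ≤ t - τ k), h1]
      · linarith [mul_nonneg (by linarith : (0:ℝ) ≤ b/2) (by linarith [ht.2] : (0:ℝ) ≤ τ (k+1) - t), h2]
    have hσabs : |σ| = 1 := by rw [hσdef, abs_pow, abs_neg, abs_one, one_pow]
    have hσcos : ∀ t ∈ Set.Icc (τ k) (τ (k+1)), σ * Real.cos (u t) = |Real.cos (u t)| := by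
      intro t ht
      have hm := hmemθ t ht
      have hθeq1 : θ k = π/2 + ((m₀' + k : ℕ):ℝ) * π := by rw [hθdef]
      have hθeq2 : θ (k+1) = π/2 + (((m₀' + k : ℕ):ℝ)+1) * π := by
        rw [hθdef]; push_cast; ring
      have h1 := cos_sign (m₀' + k) (x := u t) (by rw [hθeq1] at hm; exact hm.1)
        (by rw [hθeq2] at hm; exact_mod_cast hm.2)
      have h2 : 0 ≤ σ * Real.cos (u t) := by
        rw [hσdef]
        have : m₀' + k + 1 = (m₀' + k) + 1 := rfl
        rw [this]
        exact h1
      rw [← abs_of_nonneg h2, abs_mul, hσabs, one_mul]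
    obtain ⟨B, hB⟩ : ∃ B:ℝ, B = 2*A₂*A₃/(b*q) := ⟨_, rfl⟩
    have hB0 : 0 ≤ B := by rw [hB]; positivity
    have hsub' : ∀ t ∈ Set.Icc t₁ t₂, t ∈ Set.Icc (τ k) (τ (k+1)) :=
      fun t ht => ⟨le_trans h₁.1 ht.1, le_trans ht.2 h₂.2⟩
    have hLd : ∀ t ∈ Set.Icc (τ k) (τ (k+1)),
        HasDerivAt (fun t => B * ((σ/q) * Real.log (p + q * Real.sin (u t))))
          (B * ((σ/q) * ((p + q * Real.sin (u t))⁻¹ *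
            (q * (Real.cos (u t) * (b + dφ t)))))) t := by
      intro t ht
      have h1 : HasDerivAt (fun t => p + q * Real.sin (u t))
          (q * (Real.cos (u t) * (b + dφ t))) t := by
        have h2 := (Real.hasDerivAt_sin (u t)).comp t (hu t (hincl t ht).1)
        exact (h2.const_mul q).const_add p
      exact (((Real.hasDerivAt_log (hXpos t).ne').comp t h1).const_mul (σ/q)).const_mul B
    have hle : ∀ t ∈ Set.Icc t₁ t₂, |dφ t| ≤ B * ((σ/q) * ((p + q * Real.sin (u t))⁻¹ *
        (q * (Real.cos (u t) * (b + dφ t))))) := by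
      intro t ht
      have ht' := hsub' t ht
      have hTt := (hincl t ht').1
      have hw := (huderiv t hTt).1
      have hXp := hXpos t
      have e3 : B * ((σ/q) * ((p + q * Real.sin (u t))⁻¹ *
          (q * (Real.cos (u t) * (b + dφ t)))))
          = B * ((σ * Real.cos (u t)) * (b + dφ t)) / (p + q * Real.sin (u t)) := by
        field_simp
      rw [e3, hσcos t ht']
      have habs2 : |dφ t| = (a t * |a' t| * |Real.cos (u t)|) /
          (S t * (F t + S t * Real.sin (u t))) := by
        rw [habs' t, abs_of_pos (hdenpos t hTt)]
      rw [habs2]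
      have hD := hdenpos t hTt
      have hqX : 0 < q * (p + q * Real.sin (u t)) := mul_pos hq0 hXp
      have hnum : a t * |a' t| * |Real.cos (u t)| ≤ A₂ * A₃ * |Real.cos (u t)| :=
        mul_le_mul_of_nonneg_right
          (mul_le_mul (hbounds t).2.1 (hbounds t).2.2 (abs_nonneg _) hA₂.le)
          (abs_nonneg _)
      have hden : q * (p + q * Real.sin (u t)) ≤ S t * (F t + S t * Real.sin (u t)) := by
        apply mul_le_mul (hqS t ht') (hXF t ht') hXp.le
        exact le_trans hq0.le (hqS t ht')
      calc a t * |a' t| * |Real.cos (u t)| / (S t * (F t + S t * Real.sin (u t)))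
          ≤ (A₂ * A₃ * |Real.cos (u t)|) / (q * (p + q * Real.sin (u t))) :=
            div_le_div₀ (by positivity) hnum hqX hden
        _ ≤ B * (|Real.cos (u t)| * (b + dφ t)) / (p + q * Real.sin (u t)) := by
            rw [div_le_div_iff₀ hqX hXp]
            have e4 : B * q * b = 2*A₂*A₃ := by rw [hB]; field_simp
            have h11 : A₂*A₃ ≤ B*q*(b + dφ t) := by
              have h13 : B*q*(b/2) ≤ B*q*(b + dφ t) :=
                mul_le_mul_of_nonneg_left hw (mul_nonneg hB0 hq0.le)
              linarith
            have h12 : A₂*A₃*(|Real.cos (u t)| * (p + q * Real.sin (u t)))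
                ≤ (B*q*(b + dφ t))*(|Real.cos (u t)| * (p + q * Real.sin (u t))) :=
              mul_le_mul_of_nonneg_right h11 (mul_nonneg (abs_nonneg _) hXp.le)
            linarith [h12]
    have hkey := var_bound (f := φ) (f' := dφ)
      (g := fun t => B * ((σ/q) * Real.log (p + q * Real.sin (u t))))
      (g' := fun t => B * ((σ/q) * ((p + q * Real.sin (u t))⁻¹ *
        (q * (Real.cos (u t) * (b + dφ t)))))) h12
      (fun t ht => hφd t (hincl t (hsub' t ht)).1)
      (fun t ht => hLd t (hsub' t ht))
      hle
    -- bound the increment of the comparison function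
    have hσ2 : σ = 1 ∨ σ = -1 := by
      rw [hσdef]
      rcases Nat.even_or_odd (m₀' + k + 1) with h|h
      · left; exact h.neg_one_pow
      · right; exact h.neg_one_pow
    have hlog_lb : ∀ t : ℝ, Real.log eps ≤ Real.log (p + q * Real.sin (u t)) :=
      fun t => Real.log_le_log heps0 (hXlow t)
    have hlog_ub : ∀ t : ℝ, Real.log (p + q * Real.sin (u t)) ≤ Real.log (p + q) :=
      fun t => Real.log_le_log (hXpos t) (hXup t)
    have hBq0 : 0 ≤ B/q := div_nonneg hB0 hq0.le
    have hLdiff : B * ((σ/q) * Real.log (p + q * Real.sin (u t₂)))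
        - B * ((σ/q) * Real.log (p + q * Real.sin (u t₁)))
        ≤ (B/q) * (Real.log (p+q) - Real.log eps) := by
      rcases hσ2 with h|h <;> rw [h]
      · have e5 : B * ((1/q) * Real.log (p + q * Real.sin (u t₂)))
            - B * ((1/q) * Real.log (p + q * Real.sin (u t₁)))
            = (B/q) * (Real.log (p + q * Real.sin (u t₂)) - Real.log (p + q * Real.sin (u t₁))) := by
          ring
        rw [e5]
        exact mul_le_mul_of_nonneg_left (sub_le_sub (hlog_ub t₂) (hlog_lb t₁)) hBq0
      · have e5 : B * ((-1/q) * Real.log (p + q * Real.sin (u t₂)))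
            - B * ((-1/q) * Real.log (p + q * Real.sin (u t₁)))
            = (B/q) * (Real.log (p + q * Real.sin (u t₁)) - Real.log (p + q * Real.sin (u t₂))) := by
          ring
        rw [e5]
        exact mul_le_mul_of_nonneg_left (sub_le_sub (hlog_ub t₁) (hlog_lb t₂)) hBq0
    -- numeric estimate
    have hBq : B/q = 32*A₂*A₃/(b*α^2*(τ k)^2) := by
      rw [hB, hq]; field_simp; ring
    have hαA : 4*A₂ ≤ α * τ k := haA (τ k) hτkT
    have heps_le : eps ≤ α*τ k/2 := by
      rw [heps, div_le_div_iff₀ (by positivity) (by norm_num : (0:ℝ) < 2)]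
      have hA1A : A₁ ≤ α*τ k/4 := by linarith
      linarith [pow_le_pow_left₀ hA₁.le hA1A 2, sq_nonneg (α * τ k)]
    have hpq_le : p + q ≤ α*τ k := by
      rw [hp, hq]; linarith
    have hΔlog : Real.log (p+q) - Real.log eps ≤ 2*Real.log (τ k) + c₀ := by
      have h1 : Real.log (p+q) ≤ Real.log (α*τ k) :=
        Real.log_le_log (by linarith [heps0, hq0, hp]) hpq_le
      have e6 : (α*τ k)/eps = (8*α^2/A₁^2) * (τ k)^2 := by
        rw [heps]; field_simp
      have h2 : Real.log (α*τ k) - Real.log eps = Real.log ((8*α^2/A₁^2) * (τ k)^2) := by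
        rw [← e6, Real.log_div (by positivity) heps0.ne']
      have h3 : Real.log ((8*α^2/A₁^2) * (τ k)^2)
          = Real.log (8*α^2/A₁^2) + 2*Real.log (τ k) := by
        rw [Real.log_mul (by positivity) (by positivity), Real.log_pow]
        push_cast; ring
      have h4 : Real.log (8*α^2/A₁^2) ≤ c₀ := hc₀ ▸ le_abs_self _
      linarith
    have hlogτ : 0 ≤ Real.log (τ k) := Real.log_nonneg (by linarith)
    have h2c : 2*Real.log (τ k) + c₀ ≤ (2 + c₀)*(Real.log (τ k) + 1) := by
      nlinarith [mul_nonneg hc₀0 hlogτ]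
    calc |φ t₂ - φ t₁| ≤ (B/q) * (Real.log (p+q) - Real.log eps) :=
          le_trans hkey hLdiff
      _ ≤ (B/q) * ((2 + c₀)*(Real.log (τ k) + 1)) :=
          mul_le_mul_of_nonneg_left (le_trans hΔlog h2c) hBq0
      _ = C₂ * ((Real.log (τ k) + 1) / (τ k)^2) := by
          rw [hBq, hC₂]; field_simp
  -- Step E: telescoping
  have hVG : ∀ k : ℕ, C₂ * ((Real.log (τ k) + 1) / (τ k)^2) ≤ G (τ k) - G (τ (k+1)) := by
    intro k
    have h1 : (1:ℝ) ≤ τ k := by linarith [hτ3 k]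
    have h2 := G_diff h1 (hτord k)
    have hlogk : 0 ≤ Real.log (τ k) := Real.log_nonneg (by linarith [hτ3 k])
    have hlogk1 : Real.log (τ k) ≤ Real.log (τ (k+1)) := Real.log_le_log (hτpos k) (hτord k)
    have hsq : (τ (k+1))^2 ≤ 4*(τ k)^2 := by
      have h6 := pow_le_pow_left₀ (hτpos (k+1)).le (hτub k) 2
      have h7 : (2*τ k)^2 = 4*(τ k)^2 := by ring
      linarith [h6, h7.le]
    have hπ2b : (0:ℝ) ≤ π/(2*b) := by positivity
    have h3 : π/(2*b) * ((Real.log (τ k) + 1) / (4*(τ k)^2))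
        ≤ (τ (k+1) - τ k) * ((Real.log (τ (k+1)) + 1) / (τ (k+1))^2) := by
      apply mul_le_mul (hsp k).1
      · exact div_le_div₀ (by linarith) (by linarith) (pow_pos (hτpos (k+1)) 2) hsq
      · exact div_nonneg (by linarith) (by positivity)
      · linarith [(hsp k).1]
    have h4 : G (τ k) - G (τ (k+1))
        = C₃ * ((Real.log (τ k) + 2)/(τ k) - (Real.log (τ (k+1)) + 2)/(τ (k+1))) := by
      rw [hG]; ring
    have h5 : C₃ * (π/(2*b) * ((Real.log (τ k) + 1) / (4*(τ k)^2)))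
        ≤ G (τ k) - G (τ (k+1)) := by
      rw [h4]
      exact mul_le_mul_of_nonneg_left (le_trans h3 h2) hC₃0
    refine le_trans (le_of_eq ?_) h5
    rw [hC₃, hC₂]
    field_simp
    ring
  have hacc : ∀ k d : ℕ, |φ (τ (k+d)) - φ (τ k)| ≤ G (τ k) - G (τ (k+d)) := by
    intro k d
    induction d with
    | zero => simp
    | succ n ih =>
      have hp := hpiece (k+n) (τ (k+n)) (Set.left_mem_Icc.2 (hτord _)) (τ (k+n+1))
        (Set.right_mem_Icc.2 (hτord _)) (hτord _)
      have hv := hVG (k+n)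
      have e1 : k + (n+1) = (k+n) + 1 := by ring
      rw [e1]
      calc |φ (τ (k+n+1)) - φ (τ k)|
          ≤ |φ (τ (k+n+1)) - φ (τ (k+n))| + |φ (τ (k+n)) - φ (τ k)| := abs_sub_le _ _ _
        _ ≤ (G (τ (k+n)) - G (τ (k+n+1))) + (G (τ k) - G (τ (k+n))) := by
            have := le_trans hp hv
            linarith [ih]
        _ = G (τ k) - G (τ (k+n+1)) := by ring
  have hGτnn : ∀ k : ℕ, 0 ≤ G (τ k) := fun k => hGnn (τ k) (hτ3 k)
  have hGle : ∀ j k : ℕ, k ≤ j → |φ (τ j) - φ (τ k)| ≤ G (τ k) := by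
    intro j k hkj
    obtain ⟨d, rfl⟩ := le_iff_exists_add.1 hkj
    exact le_trans (hacc k d) (by linarith [hGτnn (k+d)])
  -- Cauchy sequence
  have hdist : ∀ n m N : ℕ, N ≤ n → N ≤ m → dist (φ (τ n)) (φ (τ m)) ≤ 2 * G (τ N) := by
    intro n m N hn hm
    rw [Real.dist_eq]
    calc |φ (τ n) - φ (τ m)| ≤ |φ (τ n) - φ (τ N)| + |φ (τ N) - φ (τ m)| := abs_sub_le _ _ _
      _ ≤ G (τ N) + G (τ N) := by
          have h1 := hGle n N hn
          have h2 := hGle m N hm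
          rw [abs_sub_comm (φ (τ N)) (φ (τ m))] at *
          linarith
      _ = 2 * G (τ N) := by ring
  have hτtop : Tendsto τ atTop atTop := by
    apply tendsto_atTop_mono hτgrow
    apply tendsto_atTop_add_const_left
    exact Tendsto.atTop_mul_const (by positivity) tendsto_natCast_atTop_atTop
  have hGto : Tendsto G atTop (nhds 0) := by
    have l1 : Tendsto (fun x:ℝ => Real.log x / x) atTop (nhds 0) :=
      Real.isLittleO_log_id_atTop.tendsto_div_nhds_zero
    have l2 : Tendsto (fun x:ℝ => 2 / x) atTop (nhds 0) :=
      Tendsto.div_atTop tendsto_const_nhds tendsto_id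
    have l3 : Tendsto (fun x:ℝ => C₃ * (Real.log x / x + 2 / x)) atTop (nhds 0) := by
      have h := (l1.add l2).const_mul C₃
      simpa only [add_zero, mul_zero] using h
    apply l3.congr'
    filter_upwards [eventually_gt_atTop (0:ℝ)] with x hx
    have hGx : G x = C₃ * ((Real.log x + 2)/x) := by rw [hG]
    rw [hGx, add_div]
  have htendG : Tendsto (fun N => 2 * G (τ N)) atTop (nhds 0) := by
    have h := (hGto.comp hτtop).const_mul 2
    simpa only [mul_zero, Function.comp] using h
  have hcs : CauchySeq (fun n : ℕ => φ (τ n)) :=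
    cauchySeq_of_le_tendsto_0 (fun N => 2 * G (τ N)) hdist htendG
  obtain ⟨φinf, hφinf⟩ := cauchySeq_tendsto_of_complete hcs
  have hlim : ∀ k : ℕ, |φ (τ k) - φinf| ≤ G (τ k) := by
    intro k
    have h0 : Tendsto (fun j : ℕ => φ (τ k) - φ (τ j)) atTop (nhds (φ (τ k) - φinf)) :=
      Tendsto.sub (tendsto_const_nhds (x := φ (τ k)) (f := (atTop : Filter ℕ))) hφinf
    have h1 : Tendsto (fun j : ℕ => |φ (τ k) - φ (τ j)|) atTop (nhds (|φ (τ k) - φinf|)) :=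
      h0.abs
    apply le_of_tendsto h1
    filter_upwards [eventually_ge_atTop k] with j hj
    rw [abs_sub_comm]
    exact hGle j k hj
  -- Step F: conclusion
  have hfinal : ∀ t ≥ τ 0 + 3, |φ t - φinf| ≤ 12*C₃*Real.log t/t := by
    intro t ht
    have hτ0t : τ 0 ≤ t := by linarith
    have hex : ∃ j : ℕ, t < τ (j+1) := by
      obtain ⟨n, hn⟩ := exists_nat_gt ((t - τ 0)*(2*b)/π)
      refine ⟨n, ?_⟩
      have h1 := hτgrow (n+1)
      have h2 : (t - τ 0)*(2*b)/π * (π/(2*b)) < n * (π/(2*b)) :=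
        mul_lt_mul_of_pos_right hn (by positivity)
      have h3 : (t - τ 0)*(2*b)/π * (π/(2*b)) = t - τ 0 := by field_simp
      have h4 : (n:ℝ) * (π/(2*b)) ≤ (n+1:ℕ) * (π/(2*b)) := by
        push_cast
        have : (0:ℝ) ≤ π/(2*b) := by positivity
        nlinarith
      rw [h3] at h2
      push_cast at h1 h4 ⊢
      linarith
    have hj2 : t < τ (Nat.find hex + 1) := Nat.find_spec hex
    have hj1 : τ (Nat.find hex) ≤ t := by
      rcases Nat.eq_zero_or_pos (Nat.find hex) with h0 | hposj
      · rw [h0]; exact hτ0t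
      · obtain ⟨i, hi⟩ := Nat.exists_eq_succ_of_ne_zero (Nat.pos_iff_ne_zero.mp hposj)
        have h5 := Nat.find_min hex (m := i) (by omega)
        push_neg at h5
        rw [hi]
        exact h5
    set j := Nat.find hex
    have hmem_t : t ∈ Set.Icc (τ j) (τ (j+1)) := ⟨hj1, hj2.le⟩
    have hp := hpiece j (τ j) (Set.left_mem_Icc.2 (hτord j)) t hmem_t hj1
    have hv := hVG j
    have hlimj := hlim j
    have h2G : |φ t - φinf| ≤ 2 * G (τ j) := by
      have h5 : |φ t - φ (τ j)| ≤ G (τ j) := le_trans hp (by linarith [hGτnn (j+1), hv])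
      calc |φ t - φinf| ≤ |φ t - φ (τ j)| + |φ (τ j) - φinf| := abs_sub_le _ _ _
        _ ≤ 2 * G (τ j) := by linarith
    have ht6 : (6:ℝ) ≤ t := by linarith [hτ3 0]
    have ht2 : (1:ℝ) ≤ t/2 := by linarith
    have hhalf : t/2 ≤ τ j := by
      have := hτub j
      linarith [hj2.le]
    have hGmono : G (τ j) ≤ G (t/2) := by
      have hd := G_diff ht2 hhalf
      have h7 : 0 ≤ (τ j - t/2) * ((Real.log (τ j) + 1)/(τ j)^2) := by
        apply mul_nonneg (by linarith)
        apply div_nonneg _ (by positivity)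
        linarith [Real.log_nonneg (show (1:ℝ) ≤ τ j by linarith [hτ3 j])]
      have h8 : (Real.log (τ j) + 2)/(τ j) ≤ (Real.log (t/2) + 2)/(t/2) := by linarith
      have e9 : G (τ j) = C₃ * ((Real.log (τ j) + 2)/(τ j)) := by rw [hG]
      have e10 : G (t/2) = C₃ * ((Real.log (t/2) + 2)/(t/2)) := by rw [hG]
      rw [e9, e10]
      exact mul_le_mul_of_nonneg_left h8 hC₃0
    have hlog2 : Real.log (t/2) ≤ Real.log t := Real.log_le_log (by linarith) (by linarith)
    have hlt1 : 1 ≤ Real.log t := hlogt1 t (by linarith)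
    have e11 : (Real.log (t/2) + 2)/(t/2) = (Real.log (t/2) + 2)*2/t :=
      div_div_eq_mul_div _ _ _
    have hfin : 2 * G (t/2) ≤ 12*C₃*Real.log t/t := by
      have e10 : G (t/2) = C₃ * ((Real.log (t/2) + 2)/(t/2)) := by rw [hG]
      rw [e10, e11]
      have h12 : Real.log (t/2) + 2 ≤ 3*Real.log t := by linarith
      have h14 : (0:ℝ) ≤ 4*C₃/t := by positivity
      have h13 := mul_le_mul_of_nonneg_left h12 h14
      have ht0 : (0:ℝ) < t := by linarith
      have e12 : 4*C₃/t*(Real.log (t/2) + 2) = 2*(C₃*((Real.log (t/2)+2)*2/t)) := by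
        field_simp; ring
      have e13 : 4*C₃/t*(3*Real.log t) = 12*C₃*Real.log t/t := by
        field_simp; ring
      linarith [e12 ▸ e13 ▸ h13]
    linarith [hGmono, h2G, hfin]
  refine ⟨φinf, ?_, 12*C₃, τ 0 + 3, hfinal⟩
  rw [tendsto_iff_dist_tendsto_zero]
  have hb1 : ∀ᶠ t in (atTop : Filter ℝ), dist (φ t) φinf ≤ 12*C₃*Real.log t/t := by
    filter_upwards [eventually_ge_atTop (τ 0 + 3)] with t ht
    rw [Real.dist_eq]
    exact hfinal t ht
  have hb2 : Tendsto (fun t : ℝ => 12*C₃*Real.log t/t) atTop (nhds 0) := by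
    have l1 : Tendsto (fun x:ℝ => Real.log x / x) atTop (nhds 0) :=
      Real.isLittleO_log_id_atTop.tendsto_div_nhds_zero
    have h := l1.const_mul (12*C₃)
    simp only [mul_zero] at h
    apply h.congr
    intro x
    ring
  exact squeeze_zero' (Eventually.of_forall fun t => dist_nonneg) hb1 hb2
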